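/- Kershaw's inequality: for any t > 0 and s ∈ (0,1), Γ(t+1)/Γ(t+s) > (t + s/2)^{1-s}. -/

import Mathlib

open Real Set Filter Topology

lemma aux1 {x : ℝ} (hx : x ∈ Set.Ioo (0:ℝ) 1) :
    Real.log (1+x) - Real.log (1-x) < 2*x/(1-x^2) := by
  obtain ⟨hx0, hx1⟩ := hx
  set f : ℝ → ℝ := fun x => 2*x/(1-x^2) - (Real.log (1+x) - Real.log (1-x)) with hf
  have key : StrictMonoOn f (Set.Ico 0 1) := by
    apply strictMonoOn_of_deriv_pos (convex_Ico 0 1)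
    · apply ContinuousOn.sub
      · apply ContinuousOn.div (by fun_prop) (by fun_prop)
        intro y hy
        obtain ⟨h0, h1⟩ := hy
        nlinarith
      · apply ContinuousOn.sub
        · exact ContinuousOn.log (by fun_prop) (fun y hy => by obtain ⟨h0,h1⟩ := hy; nlinarith)
        · exact ContinuousOn.log (by fun_prop) (fun y hy => by obtain ⟨h0,h1⟩ := hy; nlinarith)
    · rw [interior_Ico]
      intro y hy
      obtain ⟨h0, h1⟩ := hy
      have hy2 : 1 - y^2 ≠ 0 := by nlinarith
      have hd1 : HasDerivAt (fun x : ℝ => 2*x/(1-x^2))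
          ((2*(1-y^2) - 2*y*(-(2*y)))/(1-y^2)^2) y := by
        have a1 : HasDerivAt (fun x : ℝ => 2*x) 2 y := by
          simpa using (hasDerivAt_id y).const_mul 2
        have a2 : HasDerivAt (fun x : ℝ => 1-x^2) (-(2*y)) y := by
          have := ((hasDerivAt_pow 2 y).const_sub 1)
          simpa using this
        exact a1.div a2 hy2
      have hd2 : HasDerivAt (fun x : ℝ => Real.log (1+x)) ((1+y)⁻¹) y := by
        have a1 : HasDerivAt (fun x : ℝ => 1+x) 1 y := by
          simpa using (hasDerivAt_id y).const_add 1
        simpa [Function.comp_def] using (Real.hasDerivAt_log (by nlinarith)).comp y a1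
      have hd3 : HasDerivAt (fun x : ℝ => Real.log (1-x)) (-(1-y)⁻¹) y := by
        have a1 : HasDerivAt (fun x : ℝ => 1-x) (-1) y := by
          simpa using (hasDerivAt_id y).const_sub 1
        have := (Real.hasDerivAt_log (show (1:ℝ)-y ≠ 0 by nlinarith)).comp y a1
        simpa [Function.comp_def] using this
      have hd : HasDerivAt f ((2*(1-y^2) - 2*y*(-(2*y)))/(1-y^2)^2 - ((1+y)⁻¹ - (-(1-y)⁻¹))) y :=
        hd1.sub (hd2.sub hd3)
      rw [hd.deriv]
      have h1y : (0:ℝ) < 1+y := by linarith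
      have h2y : (0:ℝ) < 1-y := by linarith
      have heq : (2*(1-y^2) - 2*y*(-(2*y)))/(1-y^2)^2 - ((1+y)⁻¹ - (-(1-y)⁻¹))
          = 4*y^2/(1-y^2)^2 := by
        have h1 : (1:ℝ)+y ≠ 0 := by positivity
        have h2 : (1:ℝ)-y ≠ 0 := by linarith
        field_simp
        ring
      rw [heq]
      have : (0:ℝ) < 1 - y^2 := by nlinarith
      positivity
  have h0 : f 0 = 0 := by simp [hf]
  have := key (by constructor <;> norm_num) ⟨le_of_lt hx0, hx1⟩ hx0
  rw [h0] at this
  simpa [hf] using this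

lemma aux2 {x y : ℝ} (hx0 : 0 < x) (hxy : x < y) (hy1 : y < 1) :
    y * (Real.log (1+x) - Real.log (1-x)) < x * (Real.log (1+y) - Real.log (1-y)) := by
  set h : ℝ → ℝ := fun x => (Real.log (1+x) - Real.log (1-x))/x with hh
  have key : StrictMonoOn h (Set.Ioo 0 1) := by
    apply strictMonoOn_of_deriv_pos (convex_Ioo 0 1)
    · apply ContinuousOn.div
      · apply ContinuousOn.sub
        · exact ContinuousOn.log (by fun_prop) (fun z hz => by obtain ⟨h0,h1⟩ := hz; nlinarith)
        · exact ContinuousOn.log (by fun_prop) (fun z hz => by obtain ⟨h0,h1⟩ := hz; nlinarith)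
      · fun_prop
      · intro z hz; exact ne_of_gt hz.1
    · rw [interior_Ioo]
      intro z hz
      obtain ⟨h0, h1⟩ := hz
      have h1z : (0:ℝ) < 1+z := by linarith
      have h2z : (0:ℝ) < 1-z := by linarith
      have hd2 : HasDerivAt (fun x : ℝ => Real.log (1+x)) ((1+z)⁻¹) z := by
        have a1 : HasDerivAt (fun x : ℝ => 1+x) 1 z := by
          simpa using (hasDerivAt_id z).const_add 1
        simpa [Function.comp_def] using (Real.hasDerivAt_log (ne_of_gt h1z)).comp z a1
      have hd3 : HasDerivAt (fun x : ℝ => Real.log (1-x)) (-(1-z)⁻¹) z := by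
        have a1 : HasDerivAt (fun x : ℝ => 1-x) (-1) z := by
          simpa using (hasDerivAt_id z).const_sub 1
        simpa [Function.comp_def] using (Real.hasDerivAt_log (ne_of_gt h2z)).comp z a1
      have hd : HasDerivAt h
          ((((1+z)⁻¹ - (-(1-z)⁻¹)) * z - (Real.log (1+z) - Real.log (1-z)) * 1)/z^2) z :=
        (hd2.sub hd3).div (hasDerivAt_id z) (ne_of_gt h0)
      rw [hd.deriv]
      apply div_pos _ (by positivity)
      have hL := aux1 ⟨h0, h1⟩
      have hne : (1:ℝ)-z^2 ≠ 0 := by nlinarith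
      have he : ((1+z)⁻¹ - (-(1-z)⁻¹)) * z = 2*z/(1-z^2) := by
        rw [eq_div_iff hne]
        field_simp
        ring
      rw [he]
      linarith
  have := key ⟨hx0, hxy.trans hy1⟩ ⟨hx0.trans hxy, hy1⟩ hxy
  rw [hh] at this
  simp only [div_lt_div_iff₀ hx0 (hx0.trans hxy)] at this
  linarith [this]

lemma keylog {u s : ℝ} (hu : 0 < u) (hs0 : 0 < s) (hs1 : s < 1) :
    Real.log (u+1) - Real.log (u+s) < (1-s) * (Real.log (u+1+s/2) - Real.log (u+s/2)) := by
  set m : ℝ := u + (1+s)/2 with hm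
  have hm0 : 0 < m := by positivity
  have hm2 : 1 < 2*m := by simp [hm]; linarith
  set x : ℝ := (1-s)/(2*m) with hxdef
  set y : ℝ := 1/(2*m) with hydef
  have hx0 : 0 < x := by apply div_pos <;> linarith
  have hxy : x < y := by
    rw [hxdef, hydef, div_lt_div_iff₀ (by linarith) (by linarith)]
    nlinarith
  have hy1 : y < 1 := by rw [hydef, div_lt_one (by linarith)]; linarith
  have h := aux2 hx0 hxy hy1
  have e1 : (1:ℝ) + x = (u+1)/m := by rw [hxdef]; field_simp; ring
  have e2 : (1:ℝ) - x = (u+s)/m := by rw [hxdef]; field_simp; ring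
  have e3 : (1:ℝ) + y = (u+1+s/2)/m := by rw [hydef]; field_simp; ring
  have e4 : (1:ℝ) - y = (u+s/2)/m := by rw [hydef]; field_simp; ring
  rw [e1, e2, e3, e4, Real.log_div (by positivity) (by positivity),
    Real.log_div (by positivity) (by positivity),
    Real.log_div (by positivity) (by positivity),
    Real.log_div (by positivity) (by positivity)] at h
  have hA : Real.log (u+1) - Real.log m - (Real.log (u+s) - Real.log m)
      = Real.log (u+1) - Real.log (u+s) := by ring
  set A : ℝ := Real.log (u+1) - Real.log (u+s) with hAd
  set B : ℝ := Real.log (u+1+s/2) - Real.log (u+s/2) with hBd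
  have h' : y * A < x * B := by
    calc y * A = y * (Real.log (u+1) - Real.log m - (Real.log (u+s) - Real.log m)) := by
          rw [hA]
      _ < x * (Real.log (u+1+s/2) - Real.log m - (Real.log (u+s/2) - Real.log m)) := h
      _ = x * B := by rw [hBd]; ring
  have h2m : (0:ℝ) < 2*m := by linarith
  have hyv : 2*m*y = 1 := by rw [hydef]; field_simp
  have hxv : 2*m*x = 1-s := by rw [hxdef]; field_simp
  calc A = (2*m*y)*A := by rw [hyv]; ring
    _ = 2*m*(y*A) := by ring
    _ < 2*m*(x*B) := by exact mul_lt_mul_of_pos_left h' h2m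
    _ = (2*m*x)*B := by ring
    _ = (1-s)*B := by rw [hxv]

lemma gammaLB {x s : ℝ} (hx : 0 < x) (hs0 : 0 < s) (hs1 : s < 1) :
    x ^ (1-s) ≤ Real.Gamma (x+1) / Real.Gamma (x+s) := by
  have hG : 0 < Real.Gamma x := Real.Gamma_pos_of_pos hx
  have hG1 : 0 < Real.Gamma (x+1) := Real.Gamma_pos_of_pos (by linarith)
  have hGs : 0 < Real.Gamma (x+s) := Real.Gamma_pos_of_pos (by linarith)
  rw [le_div_iff₀ hGs]
  have hc := Real.convexOn_log_Gamma.2 (show x ∈ Set.Ioi (0:ℝ) from hx)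
    (show x+1 ∈ Set.Ioi (0:ℝ) by exact by simp; linarith)
    (show (0:ℝ) ≤ 1-s by linarith) hs0.le (by ring)
  simp only [smul_eq_mul, Function.comp_apply] at hc
  have harg : (1-s)*x + s*(x+1) = x+s := by ring
  rw [harg] at hc
  have h1 : Real.Gamma (x+s) ≤ Real.Gamma x ^ (1-s) * Real.Gamma (x+1) ^ s := by
    have := Real.exp_le_exp.2 hc
    rw [Real.exp_log hGs, Real.exp_add] at this
    rw [Real.rpow_def_of_pos hG, Real.rpow_def_of_pos hG1, mul_comm (Real.log _),
      mul_comm (Real.log _)]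
    exact this
  have e1 : x^(1-s)*x^s = x := by
    rw [← Real.rpow_add hx]; norm_num
  have e2 : Real.Gamma x^(1-s)*Real.Gamma x^s = Real.Gamma x := by
    rw [← Real.rpow_add hG]; norm_num
  have hadd : Real.Gamma (x+1) = x * Real.Gamma x := Real.Gamma_add_one (ne_of_gt hx)
  calc x^(1-s) * Real.Gamma (x+s) ≤ x^(1-s) * (Real.Gamma x ^ (1-s) * Real.Gamma (x+1) ^ s) :=
        mul_le_mul_of_nonneg_left h1 (Real.rpow_nonneg hx.le _)
    _ = Real.Gamma (x+1) := by
        rw [hadd, Real.mul_rpow hx.le hG.le,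
          show x^(1-s) * (Real.Gamma x ^ (1-s) * (x^s * Real.Gamma x ^ s))
            = (x^(1-s)*x^s) * (Real.Gamma x^(1-s)*Real.Gamma x^s) from by ring, e1, e2]

theorem kershaw (t s : ℝ) (ht : 0 < t) (hs : s ∈ Set.Ioo (0:ℝ) 1) :
    (t + s / 2) ^ (1 - s) < Real.Gamma (t + 1) / Real.Gamma (t + s) := by
  obtain ⟨hs0, hs1⟩ := hs
  set g : ℝ → ℝ := fun x => Real.Gamma (x+1) / Real.Gamma (x+s) / (x+s/2)^(1-s) with hg
  have hstep : ∀ x : ℝ, 0 < x → g (x+1) < g x := by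
    intro x hx
    have hP : 0 < Real.Gamma (x+1) := Real.Gamma_pos_of_pos (by linarith)
    have hQ : 0 < Real.Gamma (x+s) := Real.Gamma_pos_of_pos (by linarith)
    have hA : (0:ℝ) < (x+s/2)^(1-s) := Real.rpow_pos_of_pos (by linarith) _
    have hB : (0:ℝ) < (x+1+s/2)^(1-s) := Real.rpow_pos_of_pos (by linarith) _
    have hkey : (x+1) * (x+s/2)^(1-s) < (x+1+s/2)^(1-s) * (x+s) := by
      have h := keylog hx hs0 hs1
      have hq : ((x+1+s/2)/(x+s/2) : ℝ)^(1-s)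
          = Real.exp ((1-s)*(Real.log (x+1+s/2) - Real.log (x+s/2))) := by
        rw [Real.rpow_def_of_pos (by positivity), Real.log_div (by positivity) (by positivity)]
        ring_nf
      have hp : (x+1)/(x+s) = Real.exp (Real.log (x+1) - Real.log (x+s)) := by
        rw [Real.exp_sub, Real.exp_log (by positivity), Real.exp_log (by positivity)]
      have h2 : (x+1)/(x+s) < ((x+1+s/2)/(x+s/2) : ℝ)^(1-s) := by
        rw [hp, hq]; exact Real.exp_lt_exp.2 h
      rw [Real.div_rpow (by positivity) (by positivity)] at h2
      rw [div_lt_div_iff₀ (by positivity) hA] at h2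
      exact h2
    have hg1 : g (x+1) = (x+1) * Real.Gamma (x+1) / ((x+s) * Real.Gamma (x+s))
        / (x+1+s/2)^(1-s) := by
      show Real.Gamma (x+1+1) / Real.Gamma (x+1+s) / (x+1+s/2)^(1-s) = _
      rw [Real.Gamma_add_one (show x+1 ≠ 0 by positivity),
        show x+1+s = (x+s)+1 from by ring,
        Real.Gamma_add_one (show x+s ≠ 0 by positivity)]
    rw [hg1]
    show (x+1) * Real.Gamma (x+1) / ((x+s) * Real.Gamma (x+s)) / (x+1+s/2)^(1-s)
      < Real.Gamma (x+1) / Real.Gamma (x+s) / (x+s/2)^(1-s)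
    rw [div_div, div_div, div_lt_div_iff₀ (by positivity) (by positivity)]
    nlinarith [mul_lt_mul_of_pos_left hkey (mul_pos hP hQ)]
  have hlb : ∀ x : ℝ, 0 < x → (x/(x+s/2))^(1-s) ≤ g x := by
    intro x hx
    have h := gammaLB hx hs0 hs1
    rw [hg]
    show (x/(x+s/2))^(1-s) ≤ Real.Gamma (x+1) / Real.Gamma (x+s) / (x+s/2)^(1-s)
    rw [Real.div_rpow hx.le (by positivity)]
    exact (div_le_div_iff_of_pos_right (Real.rpow_pos_of_pos (by positivity) _)).2 h
  have hmono : ∀ n : ℕ, g (t+1+n) ≤ g (t+1) := by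
    intro n
    induction n with
    | zero => simp
    | succ k ih =>
      have h1 : g (t+1+(k+1:ℕ)) = g ((t+1+k)+1) := by
        congr 1; push_cast; ring
      rw [h1]
      exact le_trans (hstep (t+1+k) (by positivity)).le ih
  have hlim : Tendsto (fun n : ℕ => (((t+1+n)/(t+1+n+s/2)) : ℝ)^(1-s)) atTop (𝓝 1) := by
    have h2 : Tendsto (fun n : ℕ => (t+1+n+s/2:ℝ)) atTop atTop := by
      apply Filter.tendsto_atTop_add_const_right
      apply Filter.tendsto_atTop_add_const_left
      exact tendsto_natCast_atTop_atTop
    have h3 : Tendsto (fun n : ℕ => (s/2)*(t+1+n+s/2:ℝ)⁻¹) atTop (𝓝 0) := by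
      simpa using (h2.inv_tendsto_atTop).const_mul (s/2)
    have h1 : Tendsto (fun n : ℕ => ((t+1+n)/(t+1+n+s/2) : ℝ)) atTop (𝓝 1) := by
      have h4 := tendsto_const_nhds (x := (1:ℝ)) (f := atTop (α := ℕ)) |>.sub h3
      rw [sub_zero] at h4
      apply h4.congr
      intro n
      have hd : (t+1+n+s/2 : ℝ) ≠ 0 := by positivity
      field_simp
      ring
    have := h1.rpow_const (Or.inl one_ne_zero) (p := 1-s)
    simpa using this
  have hge1 : (1:ℝ) ≤ g (t+1) := by
    apply le_of_tendsto hlim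
    apply Filter.Eventually.of_forall
    intro n
    exact le_trans (hlb (t+1+n) (by positivity)) (hmono n)
  have hgt : (1:ℝ) < g t := lt_of_le_of_lt hge1 (hstep t ht)
  have hfin : g t = Real.Gamma (t+1) / Real.Gamma (t+s) / (t+s/2)^(1-s) := rfl
  rw [hfin, lt_div_iff₀ (Real.rpow_pos_of_pos (by positivity) _), one_mul] at hgt
  linarith [hgt]
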